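/- Let r ≥ 1, c > 0, λ_0 = ((r-1)!·c)^{1/r}, and ω a complex r-th root of unity, λ = λ_0 ω. Then the vector e = (1, λ^{-1}, 2λ^{-2}, …, (r-1)!λ^{-(r-1)}, r!λ^{-r})^T satisfies A e = λ e, where A is the (r+1)×(r+1) matrix with subdiagonal entries 1, 2, …, r, entry c in position (0, r-1), and zeros elsewhere. Moreover (r-1)!λ^{-(r-1)} = λ/c and r!λ^{-r} = r/c. -/

import Mathlib

/-- Eigenvector computation for the moment-evolution matrix. -/
theorem growth_matrix_eigenvector (r : ℕ) (hr : 1 ≤ r) (c : ℝ) (hc : 0 < c)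
    (lam0 : ℝ) (hlam0 : lam0 = (((r - 1).factorial : ℝ) * c) ^ ((1 : ℝ) / r))
    (ω : ℂ) (hω : ω ^ r = 1) (lam : ℂ) (hlam : lam = (lam0 : ℂ) * ω)
    (A : Matrix (Fin (r + 1)) (Fin (r + 1)) ℂ)
    (hA : ∀ i j : Fin (r + 1), A i j =
      (if (i : ℕ) = (j : ℕ) + 1 then ((j : ℕ) + 1 : ℂ) else 0)
      + (if (i : ℕ) = 0 ∧ (j : ℕ) = r - 1 then (c : ℂ) else 0))
    (e : Fin (r + 1) → ℂ)
    (he : ∀ k : Fin (r + 1), e k = ((k : ℕ).factorial : ℂ) * lam⁻¹ ^ (k : ℕ)) :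
    A.mulVec e = lam • e
    ∧ ((r - 1).factorial : ℂ) * lam⁻¹ ^ (r - 1) = lam / (c : ℂ)
    ∧ (r.factorial : ℂ) * lam⁻¹ ^ r = (r : ℂ) / (c : ℂ) := by
  have hrne : (r : ℝ) ≠ 0 := Nat.cast_ne_zero.mpr (by omega)
  have hbase : (0:ℝ) < ((r - 1).factorial : ℝ) * c :=
    mul_pos (by positivity) hc
  have hlam0r : lam0 ^ r = ((r - 1).factorial : ℝ) * c := by
    rw [hlam0, ← Real.rpow_natCast _ r, ← Real.rpow_mul hbase.le,
      one_div, inv_mul_cancel₀ hrne, Real.rpow_one]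
  have hlamr : lam ^ r = ((r - 1).factorial : ℂ) * (c : ℂ) := by
    rw [hlam, mul_pow, hω, mul_one]
    exact_mod_cast congrArg (Complex.ofReal) hlam0r
  have hcne : (c : ℂ) ≠ 0 := by exact_mod_cast hc.ne'
  have hfne : ((r - 1).factorial : ℂ) ≠ 0 :=
    Nat.cast_ne_zero.mpr (r-1).factorial_ne_zero
  have hlamne : lam ≠ 0 := by
    intro h
    rw [h, zero_pow (by omega)] at hlamr
    exact mul_ne_zero hfne hcne hlamr.symm
  have hpow : lam ^ (r - 1) * lam = lam ^ r := by
    rw [← pow_succ]; congr 1; omega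
  have part2 : ((r - 1).factorial : ℂ) * lam⁻¹ ^ (r - 1) = lam / (c : ℂ) := by
    rw [inv_pow]
    field_simp
    rw [← hlamr, ← hpow]
  have part3 : (r.factorial : ℂ) * lam⁻¹ ^ r = (r : ℂ) / (c : ℂ) := by
    have hfac : (r.factorial : ℂ) = (r : ℂ) * ((r-1).factorial : ℂ) := by
      exact_mod_cast congrArg (Nat.cast : ℕ → ℂ) (Nat.mul_factorial_pred (by omega)).symm
    rw [hfac, inv_pow, hlamr]
    field_simp
  refine ⟨?_, part2, part3⟩
  funext i
  obtain ⟨iv, hiv⟩ := i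
  match iv, hiv with
  | 0, hiv =>
    have h1 : (∑ j : Fin (r+1), if (0:ℕ) = (j:ℕ) + 1 then ((j:ℕ) : ℂ) * e j + 1 * e j else 0) = 0 :=
      Finset.sum_eq_zero (fun j _ => by simp)
    have h2 : (∑ j : Fin (r+1), if (j:ℕ) = r - 1 then (c:ℂ) * e j else 0)
        = (c:ℂ) * e ⟨r-1, by omega⟩ := by
      rw [Finset.sum_eq_single (⟨r-1, by omega⟩ : Fin (r+1))]
      · simp
      · intro b _ hb
        exact if_neg (by simp [Fin.ext_iff] at hb ⊢; omega)
      · simp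
    simp only [Matrix.mulVec, dotProduct, hA, add_mul, Finset.sum_add_distrib,
      ite_mul, zero_mul, Pi.smul_apply, smul_eq_mul, Fin.val_mk, true_and]
    rw [h1, h2, he, he]
    simp only [Fin.val_mk]
    rw [part2]
    field_simp
    simp
  | k + 1, hiv =>
    have h2 : (∑ j : Fin (r+1), if k + 1 = 0 ∧ (j:ℕ) = r - 1 then (c:ℂ) * e j else 0) = 0 :=
      Finset.sum_eq_zero (fun j _ => by simp)
    have h1 : (∑ j : Fin (r+1), if k + 1 = (j:ℕ) + 1 then ((j:ℕ) : ℂ) * e j + 1 * e j else 0)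
        = (k:ℂ) * e ⟨k, by omega⟩ + 1 * e ⟨k, by omega⟩ := by
      rw [Finset.sum_eq_single (⟨k, by omega⟩ : Fin (r+1))]
      · simp
      · intro b _ hb
        exact if_neg (by simp [Fin.ext_iff] at hb ⊢; omega)
      · simp
    simp only [Matrix.mulVec, dotProduct, hA, add_mul, Finset.sum_add_distrib,
      ite_mul, zero_mul, Pi.smul_apply, smul_eq_mul, Fin.val_mk]
    rw [h1, h2, he, he]
    simp only [Fin.val_mk, Nat.factorial_succ]
    push_cast [pow_succ]
    field_simp
    ring
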